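/- Let η be an admissible map. Then ℚ^{Π_η} = ∪_{Π' ∈ Π̃_η} C_{Π'}; that is, for every x ∈ ℚ^{Π_η} there exists a subset Π' ⊆ Π_η on which ρ_η is injective such that x is a nonnegative rational linear combination of elements of S(Π'). (This is the completeness of the fan 𝓕_η associated with η.) -/

import Mathlib

open scoped RealInnerProductSpace Classical

lemma admfan_cycle {E : Type*} [NormedAddCommGroup E] [InnerProductSpace ℝ E]
    (P : Finset E)
    (h0 : ∀ α ∈ P, α ≠ (0 : E))
    (hli : LinearIndependent ℝ (fun a : P => (a : E)))
    (hobtuse : ∀ α ∈ P, ∀ β ∈ P, α ≠ β → ⟪α, β⟫ ≤ 0)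
    (hcart : ∀ α ∈ P, ∀ β ∈ P, α ≠ β → ∃ n : ℤ, 2 * ⟪α, β⟫ / ⟪α, α⟫ = (n : ℝ))
    (η : E → E → ℤ)
    (am5 : ∀ α ∈ P, ∀ β ∈ P, α ≠ β → 2 * ⟪α, β⟫ / ⟪α, α⟫ ≤ (η α β : ℝ))
    (m : ℕ) (v : Fin (m+3) → E) (hvP : ∀ i, v i ∈ P)
    (hinj : Function.Injective v)
    (hedge : ∀ i : Fin (m+3), η (v i) (v (i+1)) < 0) : False := by
  have hvne : ∀ i, v i ≠ 0 := fun i => h0 _ (hvP i)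
  have hnorm : ∀ i, (0:ℝ) < ‖v i‖ := fun i => norm_pos_iff.mpr (hvne i)
  have hii : ∀ i : Fin (m+3), ⟪v i, v i⟫ = ‖v i‖^2 := fun i => real_inner_self_eq_norm_sq _
  have hone : (1 : Fin (m+3)) ≠ 0 := by
    simp [Fin.ext_iff]
  have hne1 : ∀ i : Fin (m+3), i ≠ i + 1 := by
    intro i h
    exact hone (left_eq_add.mp h)
  have hkey : ∀ i : Fin (m+3),
      2 * ⟪v i, v (i+1)⟫ ≤ -(‖v i‖ * ‖v (i+1)‖) := by
    intro i
    have hab : v i ≠ v (i+1) := fun h => hne1 i (hinj h)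
    have haP := hvP i; have hbP := hvP (i+1)
    have h5 := am5 _ haP _ hbP hab
    have hηle : ((η (v i) (v (i+1)) : ℝ)) ≤ -1 := by
      have := hedge i
      exact_mod_cast (by omega : η (v i) (v (i+1)) ≤ -1)
    have hiaa : (0:ℝ) < ⟪v i, v i⟫ := by rw [hii]; exact pow_pos (hnorm i) 2
    have h1 : 2*⟪v i, v (i+1)⟫ ≤ -‖v i‖^2 := by
      have hd : 2*⟪v i, v (i+1)⟫ / ⟪v i, v i⟫ ≤ -1 := le_trans h5 hηle
      have := (div_le_iff₀ hiaa).mp hd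
      rw [hii] at this; linarith
    have hib : ⟪v (i+1), v i⟫ < 0 := by
      rw [real_inner_comm]
      nlinarith [sq_nonneg (‖v i‖), hnorm i]
    obtain ⟨n, hn⟩ := hcart _ hbP _ haP hab.symm
    have hibb : (0:ℝ) < ⟪v (i+1), v (i+1)⟫ := by rw [hii]; exact pow_pos (hnorm (i+1)) 2
    have hnneg : (n:ℝ) < 0 := by
      rw [← hn]
      exact div_neg_of_neg_of_pos (by linarith) hibb
    have hn0 : n < 0 := by exact_mod_cast hnneg
    have hn1 : (n:ℝ) ≤ -1 := by exact_mod_cast (by omega : n ≤ -1)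
    have h2 : 2*⟪v i, v (i+1)⟫ ≤ -‖v (i+1)‖^2 := by
      have hd : 2*⟪v (i+1), v i⟫ / ⟪v (i+1), v (i+1)⟫ ≤ -1 := by rw [hn]; exact hn1
      have := (div_le_iff₀ hibb).mp hd
      rw [hii, real_inner_comm] at this; linarith
    nlinarith [hnorm i, hnorm (i+1), sq_nonneg (‖v i‖ - ‖v (i+1)‖)]
  set u : Fin (m+3) → E := fun i => ‖v i‖⁻¹ • v i with hu
  have huij : ∀ i j, ⟪u i, u j⟫ = ‖v i‖⁻¹ * (‖v j‖⁻¹ * ⟪v i, v j⟫) := by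
    intro i j
    simp only [hu, real_inner_smul_left, real_inner_smul_right]
    ring
  have hud : ∀ i, ⟪u i, u i⟫ = 1 := by
    intro i
    rw [huij, hii]
    have h := (hnorm i).ne'
    field_simp
  have huneg : ∀ i j, i ≠ j → ⟪u i, u j⟫ ≤ 0 := by
    intro i j hij
    rw [huij]
    have h1 := hobtuse _ (hvP i) _ (hvP j) (fun h => hij (hinj h))
    have h2 := (hnorm i).le
    have h3 := (hnorm j).le
    rw [← mul_assoc]
    exact mul_nonpos_iff.mpr (Or.inl ⟨by positivity, h1⟩)
  have huedge : ∀ i, ⟪u i, u (i+1)⟫ ≤ -(1/2) := by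
    intro i
    rw [huij]
    have hA := hnorm i; have hB := hnorm (i+1)
    have heq : ‖v i‖⁻¹ * (‖v (i+1)‖⁻¹ * ⟪v i, v (i+1)⟫)
        = ⟪v i, v (i+1)⟫ / (‖v i‖ * ‖v (i+1)‖) := by
      field_simp
    rw [heq, div_le_iff₀ (by positivity)]
    have := hkey i
    nlinarith
  have hrow : ∀ i : Fin (m+3), ∑ j, ⟪u i, u j⟫ ≤ 0 := by
    intro i
    have hd1 : i + 1 ≠ i - 1 := by
      intro h
      have h2 : i + 1 + 1 = i := by rw [h]; exact sub_add_cancel i 1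
      have h3 : i + 1 + 1 = i + (1 + 1) := add_assoc i 1 1
      rw [h3] at h2
      have h4 : (1 + 1 : Fin (m+3)) = 0 := left_eq_add.mp h2.symm
      have h5 : ((1+1 : Fin (m+3))).val = 2 := by
        rw [Fin.val_add, Fin.val_one']
        have h1 : (1 : ℕ) % (m+3) = 1 := Nat.mod_eq_of_lt (by omega)
        rw [h1]
        exact Nat.mod_eq_of_lt (by omega)
      rw [h4] at h5
      simp at h5
    have hd2 : i ≠ i + 1 := hne1 i
    have hd3 : i ≠ i - 1 := by
      intro h
      exact hne1 i (eq_sub_iff_add_eq.mp h).symm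
    have hsub : ({i, i+1, i-1} : Finset (Fin (m+3))) ⊆ Finset.univ :=
      Finset.subset_univ _
    rw [← Finset.sum_sdiff hsub]
    have hA : ∑ j ∈ ({i, i+1, i-1} : Finset (Fin (m+3))), ⟪u i, u j⟫ ≤ 0 := by
      rw [Finset.sum_insert (by simp [hd2, hd3]),
        Finset.sum_insert (by simp [hd1]), Finset.sum_singleton]
      have e1 := hud i
      have e2 := huedge i
      have e3 : ⟪u i, u (i-1)⟫ ≤ -(1/2) := by
        have h := huedge (i - 1)
        rw [sub_add_cancel] at h
        rw [real_inner_comm]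
        exact h
      linarith
    have hB : ∑ j ∈ Finset.univ \ ({i, i+1, i-1} : Finset (Fin (m+3))), ⟪u i, u j⟫ ≤ 0 := by
      refine Finset.sum_nonpos fun j hj => ?_
      have hji : i ≠ j := by
        intro h; rw [Finset.mem_sdiff] at hj
        exact hj.2 (by simp [← h])
      exact huneg i j hji
    linarith
  have hss : ⟪∑ i, u i, ∑ j, u j⟫ ≤ 0 := by
    rw [sum_inner]
    refine Finset.sum_nonpos fun i _ => ?_
    rw [inner_sum]
    exact hrow i
  have hz : ∑ i, u i = 0 := real_inner_self_nonpos.mp hss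
  have hli2 : LinearIndependent ℝ (fun i : Fin (m+3) => v i) := by
    have h := hli.comp (fun i : Fin (m+3) => (⟨v i, hvP i⟩ : P))
      (fun i j h => hinj (congrArg Subtype.val h))
    exact h
  have hzero := Fintype.linearIndependent_iff.mp hli2 (fun i => ‖v i‖⁻¹)
    (by simpa [hu] using hz) ⟨0, by omega⟩
  exact absurd hzero (by
    have := hnorm ⟨0, by omega⟩
    positivity)

lemma admfan_sink {E : Type*} [NormedAddCommGroup E] [InnerProductSpace ℝ E]
    (P : Finset E)
    (h0 : ∀ α ∈ P, α ≠ (0 : E))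
    (hli : LinearIndependent ℝ (fun a : P => (a : E)))
    (hobtuse : ∀ α ∈ P, ∀ β ∈ P, α ≠ β → ⟪α, β⟫ ≤ 0)
    (hcart : ∀ α ∈ P, ∀ β ∈ P, α ≠ β → ∃ n : ℤ, 2 * ⟪α, β⟫ / ⟪α, α⟫ = (n : ℝ))
    (η : E → E → ℤ)
    (am4 : ∀ α ∈ P, ∀ β ∈ P, η α β < 0 → η β α = 0)
    (am5 : ∀ α ∈ P, ∀ β ∈ P, α ≠ β → 2 * ⟪α, β⟫ / ⟪α, α⟫ ≤ (η α β : ℝ))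
    (Pη : Finset E) (hPη : ∀ α, α ∈ Pη ↔ α ∈ P ∧ η α α = 1)
    (Q : Finset E) (hQ : Q ⊆ Pη) (hne : Q.Nonempty) :
    ∃ γ0 ∈ Q, ∀ β ∈ Q, 0 ≤ η γ0 β := by
  by_contra hcon
  push_neg at hcon
  have hQP : ∀ γ ∈ Q, γ ∈ P := fun γ h => ((hPη γ).mp (hQ h)).1
  have hQ1 : ∀ γ ∈ Q, η γ γ = 1 := fun γ h => ((hPη γ).mp (hQ h)).2
  classical
  set f : E → E := fun γ => if h : ∃ β ∈ Q, η γ β < 0 then h.choose else γ with hf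
  have hfs : ∀ γ ∈ Q, f γ ∈ Q ∧ η γ (f γ) < 0 := by
    intro γ hγ
    obtain ⟨β, hβ, hlt⟩ := hcon γ hγ
    have hex : ∃ β ∈ Q, η γ β < 0 := ⟨β, hβ, hlt⟩
    rw [hf]
    simp only [dif_pos hex]
    exact ⟨hex.choose_spec.1, hex.choose_spec.2⟩
  obtain ⟨γ, hγ⟩ := hne
  set g : ℕ → E := fun n => f^[n] γ with hg
  have hgf : ∀ n, g (n+1) = f (g n) := fun n => Function.iterate_succ_apply' f n γ
  have hgQ : ∀ n, g n ∈ Q := by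
    intro n; induction n with
    | zero => exact hγ
    | succ n ih =>
      rw [hgf n]
      exact (hfs _ ih).1
  have hglt : ∀ n, η (g n) (g (n+1)) < 0 := by
    intro n; rw [hgf n]; exact (hfs _ (hgQ n)).2
  have hcard : Fintype.card Q < Fintype.card (Fin (Q.card + 1)) := by
    simp [Fintype.card_coe]
  obtain ⟨a, b, hab, heq⟩ := Fintype.exists_ne_map_eq_of_card_lt
    (fun n : Fin (Q.card+1) => (⟨g n.val, hgQ n.val⟩ : Q)) hcard
  have hgab : g a.val = g b.val := congrArg Subtype.val heq
  have hvne : a.val ≠ b.val := fun h => hab (Fin.ext h)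
  have hex : ∃ d, 0 < d ∧ ∃ i, g (i + d) = g i := by
    rcases Nat.lt_or_ge a.val b.val with h | h
    · exact ⟨b.val - a.val, by omega, a.val, by
        rw [show a.val + (b.val - a.val) = b.val by omega]; exact hgab.symm⟩
    · exact ⟨a.val - b.val, by omega, b.val, by
        rw [show b.val + (a.val - b.val) = a.val by omega]; exact hgab⟩
  set d0 := Nat.find hex with hd0
  obtain ⟨hd0pos, i0, hper⟩ := Nat.find_spec hex
  rw [← hd0] at hper hd0pos
  rcases Nat.lt_or_ge d0 3 with h3 | h3
  · have hd12 : d0 = 1 ∨ d0 = 2 := by omega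
    rcases hd12 with h | h
    · have h1 := hglt i0
      rw [h] at hper
      rw [hper] at h1
      · have := hQ1 _ (hgQ i0); omega
    · have h1 := hglt i0
      have h2 := hglt (i0+1)
      rw [show i0 + 1 + 1 = i0 + 2 by ring] at h2
      rw [h] at hper
      rw [hper] at h2
      have h4 := am4 _ (hQP _ (hgQ i0)) _ (hQP _ (hgQ (i0+1))) h1
      omega
  · obtain ⟨m, hm⟩ : ∃ m, d0 = m + 3 := ⟨d0 - 3, by omega⟩
    set v : Fin (m+3) → E := fun j => g (i0 + j.val) with hv
    have hvQ : ∀ j, v j ∈ Q := fun j => hgQ _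
    have hvinj : Function.Injective v := by
      intro j1 j2 hj
      by_contra hne'
      have hvne2 : j1.val ≠ j2.val := fun h => hne' (Fin.ext h)
      rcases Nat.lt_or_ge j1.val j2.val with h | h
      · have hgg : g ((i0 + j1.val) + (j2.val - j1.val)) = g (i0 + j1.val) := by
          rw [show (i0 + j1.val) + (j2.val - j1.val) = i0 + j2.val by omega]
          exact hj.symm
        have hlt : j2.val - j1.val < d0 := by have := j2.isLt; omega
        exact Nat.find_min hex hlt ⟨by omega, _, hgg⟩
      · have hgg : g ((i0 + j2.val) + (j1.val - j2.val)) = g (i0 + j2.val) := by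
          rw [show (i0 + j2.val) + (j1.val - j2.val) = i0 + j1.val by omega]
          exact hj
        have hlt : j1.val - j2.val < d0 := by have := j1.isLt; omega
        exact Nat.find_min hex hlt ⟨by omega, _, hgg⟩
    have hstep : ∀ j : Fin (m+3), η (v j) (v (j+1)) < 0 := by
      intro j
      have hval1 : (j+1 : Fin (m+3)).val = (j.val + 1) % (m+3) := by
        rw [Fin.val_add, Fin.val_one']
        rw [Nat.mod_eq_of_lt (show 1 < m+3 by omega)]
      rcases Nat.lt_or_ge (j.val+1) (m+3) with h | h
      · have hveq : v (j+1) = g ((i0 + j.val) + 1) := by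
          rw [hv]; simp only
          congr 1
          rw [hval1, Nat.mod_eq_of_lt h]
          omega
        rw [hveq]
        exact hglt (i0 + j.val)
      · have hj3 : j.val = m+2 := by have := j.isLt; omega
        have hveq : v (j+1) = g i0 := by
          rw [hv]; simp only
          congr 1
          rw [hval1, hj3]
          simp [Nat.mod_self]
        have h2 : g i0 = g ((i0 + j.val) + 1) := by
          rw [hj3, show (i0 + (m+2)) + 1 = i0 + d0 by omega]
          exact hper.symm
        rw [hveq, h2]
        exact hglt (i0 + j.val)
    exact admfan_cycle P h0 hli hobtuse hcart η am5 m v (fun j => hQP _ (hvQ j)) hvinj hstep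

lemma admfan_key {E : Type*} [NormedAddCommGroup E] [InnerProductSpace ℝ E]
    (P : Finset E)
    (h0 : ∀ α ∈ P, α ≠ (0 : E))
    (hli : LinearIndependent ℝ (fun a : P => (a : E)))
    (hobtuse : ∀ α ∈ P, ∀ β ∈ P, α ≠ β → ⟪α, β⟫ ≤ 0)
    (hcart : ∀ α ∈ P, ∀ β ∈ P, α ≠ β → ∃ n : ℤ, 2 * ⟪α, β⟫ / ⟪α, α⟫ = (n : ℝ))
    (η : E → E → ℤ)
    (hval : ∀ α ∈ P, ∀ β ∈ P, η α β ∈ ({-3, -2, -1, 0, 1} : Set ℤ))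
    (am3 : ∀ α ∈ P, ∀ β ∈ P, η α β = 1 → ∀ γ ∈ P, η α γ = η β γ)
    (am4 : ∀ α ∈ P, ∀ β ∈ P, η α β < 0 → η β α = 0)
    (am5 : ∀ α ∈ P, ∀ β ∈ P, α ≠ β → 2 * ⟪α, β⟫ / ⟪α, α⟫ ≤ (η α β : ℝ))
    (Pη : Finset E) (hPη : ∀ α, α ∈ Pη ↔ α ∈ P ∧ η α α = 1) :
    ∀ n : ℕ, ∀ Q : Finset E, Q.card ≤ n → Q ⊆ Pη → ∀ x : E → ℚ,
      ∃ (P' : Finset E) (a : E → ℚ),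
        P' ⊆ Q ∧ (∀ α ∈ P', ∀ β ∈ P', α ≠ β → η α β ≠ 1) ∧ (∀ α, 0 ≤ a α) ∧
        (∀ γ ∈ P', (∑ α ∈ P', a α * (η α γ : ℚ)) = x γ) ∧
        (∀ γ ∈ Q, x γ ≤ ∑ α ∈ P', a α * (η α γ : ℚ)) := by
  intro n
  induction n with
  | zero =>
    intro Q hcard _ x
    have hQ : Q = ∅ := Finset.card_eq_zero.mp (Nat.le_zero.mp hcard)
    subst hQ
    exact ⟨∅, 0, Finset.Subset.refl _, by simp, fun α => le_refl 0, by simp, by simp⟩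
  | succ n ih =>
    intro Q hcard hQsub x
    rcases Finset.eq_empty_or_nonempty Q with rfl | hne
    · exact ⟨∅, 0, Finset.Subset.refl _, by simp, fun α => le_refl 0, by simp, by simp⟩
    obtain ⟨γ0, hγ0Q, hsink⟩ := admfan_sink P h0 hli hobtuse hcart η am4 am5 Pη hPη Q hQsub hne
    have hQP : ∀ γ ∈ Q, γ ∈ P := fun γ h => ((hPη γ).mp (hQsub h)).1
    have hQ1 : ∀ γ ∈ Q, η γ γ = 1 := fun γ h => ((hPη γ).mp (hQsub h)).2
    classical
    set C : Finset E := Q.filter (fun β => η γ0 β = 1) with hC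
    have hγ0C : γ0 ∈ C := Finset.mem_filter.mpr ⟨hγ0Q, hQ1 _ hγ0Q⟩
    set R : Finset E := Q \ C with hR
    have hRsub : R ⊆ Q := Finset.sdiff_subset
    have hRcard : R.card ≤ n := by
      have h1 : R.card + C.card = Q.card := by
        rw [hR]
        exact Finset.card_sdiff_add_card_eq_card (Finset.filter_subset _ _)
      have h2 : 0 < C.card := Finset.card_pos.mpr ⟨γ0, hγ0C⟩
      omega
    obtain ⟨P'', a'', hsub'', hpair'', hnn'', heq'', hge''⟩ :=
      ih R hRcard (Finset.Subset.trans hRsub hQsub) x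
    -- rows of C members agree with γ0
    have hrow : ∀ γ ∈ C, ∀ δ ∈ P, η γ δ = η γ0 δ := by
      intro γ hγ δ hδ
      have hγQ : γ ∈ Q := (Finset.mem_filter.mp hγ).1
      have h1 : η γ0 γ = 1 := (Finset.mem_filter.mp hγ).2
      exact (am3 _ (hQP _ hγ0Q) _ (hQP _ hγQ) h1 δ hδ).symm
    have hC0 : ∀ γ ∈ C, ∀ β ∈ R, η γ β = 0 := by
      intro γ hγ β hβ
      have hβQ : β ∈ Q := hRsub hβ
      have h1 : η γ β = η γ0 β := hrow γ hγ β (hQP _ hβQ)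
      have h2 : 0 ≤ η γ0 β := hsink β hβQ
      have h3 : η γ0 β ≠ 1 := by
        intro h
        rw [hR, Finset.mem_sdiff] at hβ
        exact hβ.2 (Finset.mem_filter.mpr ⟨hβQ, h⟩)
      have h4 := hval _ (hQP _ hγ0Q) _ (hQP _ hβQ)
      simp only [Set.mem_insert_iff, Set.mem_singleton_iff] at h4
      omega
    have hC1 : ∀ γ ∈ C, ∀ δ ∈ C, η γ δ = 1 := by
      intro γ hγ δ hδ
      rw [hrow γ hγ δ (hQP _ (Finset.mem_filter.mp hδ).1)]
      exact (Finset.mem_filter.mp hδ).2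
    set t : E → ℚ := fun γ => x γ - ∑ α ∈ P'', a'' α * (η α γ : ℚ) with ht
    obtain ⟨γ1, hγ1C, hmax⟩ := C.exists_max_image t ⟨γ0, hγ0C⟩
    have hγ1Q : γ1 ∈ Q := (Finset.mem_filter.mp hγ1C).1
    have hγ1nR : γ1 ∉ R := by
      rw [hR, Finset.mem_sdiff]
      exact fun h => h.2 hγ1C
    have hγ1nP'' : γ1 ∉ P'' := fun h => hγ1nR (hsub'' h)
    have hnR1 : ∀ β ∈ P'', η β γ1 ≠ 1 := by
      intro β hβ h
      have hβR : β ∈ R := hsub'' hβ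
      have h1 := am3 _ (hQP _ (hRsub hβR)) _ (hQP _ hγ1Q) h β (hQP _ (hRsub hβR))
      rw [hC0 γ1 hγ1C β hβR] at h1
      have := hQ1 _ (hRsub hβR)
      omega
    by_cases hpos : 0 ≤ t γ1
    · refine ⟨insert γ1 P'', fun α => if α = γ1 then t γ1 else a'' α, ?_, ?_, ?_, ?_, ?_⟩
      · intro α hα
        rcases Finset.mem_insert.mp hα with rfl | h
        · exact hγ1Q
        · exact hRsub (hsub'' h)
      · intro α hα β hβ hne'
        rcases Finset.mem_insert.mp hα with rfl | hα' <;>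
          rcases Finset.mem_insert.mp hβ with rfl | hβ'
        · exact absurd rfl hne'
        · rw [hC0 α hγ1C β (hsub'' hβ')]; omega
        · exact hnR1 α hα'
        · exact hpair'' α hα' β hβ' hne'
      · intro α
        by_cases h : α = γ1
        · simp [h, hpos]
        · simp [h, hnn'' α]
      all_goals {
        have hsum : ∀ δ : E, ∑ α ∈ insert γ1 P'',
            (if α = γ1 then t γ1 else a'' α) * (η α δ : ℚ)
            = t γ1 * (η γ1 δ : ℚ) + ∑ α ∈ P'', a'' α * (η α δ : ℚ) := by
          intro δ
          rw [Finset.sum_insert hγ1nP'', if_pos rfl]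
          congr 1
          refine Finset.sum_congr rfl fun α hα => ?_
          rw [if_neg (by rintro rfl; exact hγ1nP'' hα)]
        first
        | · -- equality on P'
            intro δ hδ
            rw [hsum δ]
            rcases Finset.mem_insert.mp hδ with rfl | hδ'
            · rw [hC1 δ hγ1C δ hγ1C]
              simp only [ht]
              push_cast
              ring
            · rw [hC0 γ1 hγ1C δ (hsub'' hδ')]
              push_cast
              rw [heq'' δ hδ']; ring
        | · -- inequality on Q
            intro δ hδ
            rw [hsum δ]
            by_cases hδC : δ ∈ C
            · rw [hC1 γ1 hγ1C δ hδC]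
              have h1 : x δ - ∑ α ∈ P'', a'' α * (η α δ : ℚ)
                  ≤ x γ1 - ∑ α ∈ P'', a'' α * (η α γ1 : ℚ) := hmax δ hδC
              simp only [ht]
              push_cast
              linarith
            · have hδR : δ ∈ R := by rw [hR, Finset.mem_sdiff]; exact ⟨hδ, hδC⟩
              rw [hC0 γ1 hγ1C δ hδR]
              have h1 := hge'' δ hδR
              push_cast
              linarith
      }
    · refine ⟨P'', a'', Finset.Subset.trans hsub'' hRsub, hpair'', hnn'', heq'', ?_⟩
      intro δ hδ
      by_cases hδC : δ ∈ C
      · have h1 : x δ - ∑ α ∈ P'', a'' α * (η α δ : ℚ)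
            ≤ x γ1 - ∑ α ∈ P'', a'' α * (η α γ1 : ℚ) := hmax δ hδC
        have h2 : x γ1 - ∑ α ∈ P'', a'' α * (η α γ1 : ℚ) < 0 := lt_of_not_ge hpos
        linarith
      · exact hge'' δ (by rw [hR, Finset.mem_sdiff]; exact ⟨hδ, hδC⟩)

/-- Let `η` be an admissible map on a set `P` of simple roots and set
`Pη = {α ∈ P : η α α = 1}`.  Then `ℚ^{Pη}` is the union of the cones `C_{P'}` over the
subsets `P' ⊆ Pη` on which `ρ_η` is injective: every `x : Pη → ℚ` is a nonnegative
rational combination of the vectors `ρ_η α` (`α ∈ P'`) and `−ĕ_α` (`α ∈ Pη \ P'`)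
for some such subset `P'`.  (Completeness of the fan `𝓕_η`.) -/
theorem admissible_map_fan_complete
    {E : Type*} [NormedAddCommGroup E] [InnerProductSpace ℝ E]
    (P : Finset E)
    (h0 : ∀ α ∈ P, α ≠ (0 : E))
    (hli : LinearIndependent ℝ (fun a : P => (a : E)))
    (hobtuse : ∀ α ∈ P, ∀ β ∈ P, α ≠ β → ⟪α, β⟫ ≤ 0)
    (hcart : ∀ α ∈ P, ∀ β ∈ P, α ≠ β → ∃ n : ℤ, 2 * ⟪α, β⟫ / ⟪α, α⟫ = (n : ℝ))
    (η : E → E → ℤ)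
    (hval : ∀ α ∈ P, ∀ β ∈ P, η α β ∈ ({-3, -2, -1, 0, 1} : Set ℤ))
    (am1 : ∀ α ∈ P, η α α = 0 ∨ η α α = 1)
    (am2 : ∀ α ∈ P, η α α = 0 → ∀ β ∈ P, η α β = 0 ∧ η β α = 0)
    (am3 : ∀ α ∈ P, ∀ β ∈ P, η α β = 1 → ∀ γ ∈ P, η α γ = η β γ)
    (am4 : ∀ α ∈ P, ∀ β ∈ P, η α β < 0 → η β α = 0)
    (am5 : ∀ α ∈ P, ∀ β ∈ P, α ≠ β → 2 * ⟪α, β⟫ / ⟪α, α⟫ ≤ (η α β : ℝ))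
    (Pη : Finset E) (hPη : ∀ α, α ∈ Pη ↔ α ∈ P ∧ η α α = 1) :
    ∀ x : {y // y ∈ Pη} → ℚ,
      ∃ P' : Finset E, P' ⊆ Pη ∧
        (∀ α ∈ P', ∀ β ∈ P', (∀ γ ∈ Pη, η α γ = η β γ) → α = β) ∧
        ∃ a c : E → ℚ, (∀ α, 0 ≤ a α) ∧ (∀ α, 0 ≤ c α) ∧
          ∀ γ : {y // y ∈ Pη},
            x γ = (∑ α ∈ P', a α * (η α (γ : E) : ℚ))
                + ∑ α ∈ Pη \ P', c α * (if (γ : E) = α then -1 else 0) := by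
  intro x
  classical
  set X : E → ℚ := fun γ => if h : γ ∈ Pη then x ⟨γ, h⟩ else 0 with hX
  obtain ⟨P', a, hsub, hpair, hnn, heqP, hgeQ⟩ :=
    admfan_key P h0 hli hobtuse hcart η hval am3 am4 am5 Pη hPη
      Pη.card Pη le_rfl (Finset.Subset.refl _) X
  set c : E → ℚ := fun γ =>
    if γ ∈ Pη \ P' then (∑ α ∈ P', a α * (η α γ : ℚ)) - X γ else 0 with hc
  refine ⟨P', hsub, ?_, a, c, hnn, ?_, ?_⟩
  · -- injectivity of rows on Pη
    intro α hα β hβ hrows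
    by_contra hne
    have h1 : η α β = η β β := hrows β (hsub hβ)
    have h2 : η β β = 1 := ((hPη β).mp (hsub hβ)).2
    exact hpair α hα β hβ hne (h1.trans h2)
  · -- nonnegativity of c
    intro γ
    simp only [hc]
    by_cases h : γ ∈ Pη \ P'
    · rw [if_pos h]
      have := hgeQ γ (Finset.mem_sdiff.mp h).1
      linarith
    · rw [if_neg h]
  · -- main identity
    intro γ
    have hxX : x γ = X (γ : E) := by
      rw [hX]
      simp only [dif_pos γ.2]
    have hsum2 : ∑ α ∈ Pη \ P', c α * (if (γ : E) = α then -1 else 0)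
        = if (γ : E) ∈ Pη \ P' then -c (γ : E) else 0 := by
      rw [← Finset.sum_ite_eq (Pη \ P') (γ : E) (fun α => -c α)]
      refine Finset.sum_congr rfl fun α _ => ?_
      by_cases h : (γ : E) = α
      · rw [if_pos h, if_pos h]; ring
      · rw [if_neg h, if_neg h]; ring
    rw [hsum2]
    by_cases hmem : (γ : E) ∈ P'
    · rw [if_neg (fun h => (Finset.mem_sdiff.mp h).2 hmem)]
      rw [hxX, ← heqP _ hmem]
      ring
    · have hin : (γ : E) ∈ Pη \ P' := Finset.mem_sdiff.mpr ⟨γ.2, hmem⟩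
      rw [if_pos hin]
      simp only [hc, if_pos hin]
      rw [hxX]
      ring
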